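/- Suppose the Shearer criterion is satisfied with ε-slack and V ⊆ 𝓑 is a dependency-clique. Then for any ρ with 0 ≤ ρ < ε, the sum over B in V of the adjusted weights a_ρ(τ) = w(τ)(1+ρ)^{|τ|} over all single-sink witness DAGs τ with sink labeled B is at most (1+ρ)/(ε−ρ). -/

import Mathlib

open scoped BigOperators ENNReal Classical

namespace LLL

/-- Two bad events are dependent iff their variable sets intersect. -/
def Dep {n : ℕ} {E : Type} (S : E → Finset (Fin n)) (b b' : E) : Prop :=
  (S b ∩ S b').Nonempty

/-- A witness DAG: a finite DAG with nodes labeled by bad events, where any two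
nodes with dependent labels are joined by an edge (in one direction), and nodes
with non-dependent labels have no edge. -/
structure WDag (n : ℕ) (E : Type) (S : E → Finset (Fin n)) where
  size : ℕ
  label : Fin size → E
  edge : Fin size → Fin size → Prop
  acyclic : ∀ v, ¬ Relation.TransGen edge v v
  edge_dep : ∀ v w, edge v w → Dep S (label v) (label w)
  dep_edge : ∀ v w, v ≠ w → Dep S (label v) (label w) → edge v w ∨ edge w v

namespace WDag

variable {n : ℕ} {E : Type} {S : E → Finset (Fin n)}

/-- Isomorphism of witness DAGs. -/
def Iso (G G' : WDag n E S) : Prop :=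
  ∃ e : Fin G.size ≃ Fin G'.size,
    (∀ v, G'.label (e v) = G.label v) ∧ ∀ v w, G'.edge (e v) (e w) ↔ G.edge v w

theorem Iso.refl (G : WDag n E S) : Iso G G :=
  ⟨Equiv.refl _, fun _ => rfl, fun _ _ => Iff.rfl⟩

theorem Iso.symm {G G' : WDag n E S} (h : Iso G G') : Iso G' G := by
  obtain ⟨e, hl, he⟩ := h
  refine ⟨e.symm, fun v => ?_, fun v w => ?_⟩
  · simpa using (hl (e.symm v)).symm
  · simpa using (he (e.symm v) (e.symm w)).symm

theorem Iso.trans {G₁ G₂ G₃ : WDag n E S} (h12 : Iso G₁ G₂) (h23 : Iso G₂ G₃) :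
    Iso G₁ G₃ := by
  obtain ⟨e, hl, he⟩ := h12
  obtain ⟨f, hl', he'⟩ := h23
  refine ⟨e.trans f, fun v => ?_, fun v w => ?_⟩
  · rw [Equiv.trans_apply, hl' (e v), hl v]
  · rw [Equiv.trans_apply, Equiv.trans_apply, he' (e v) (e w), he v w]

instance wdSetoid (n : ℕ) (E : Type) (S : E → Finset (Fin n)) : Setoid (WDag n E S) :=
  ⟨Iso, ⟨Iso.refl, Iso.symm, Iso.trans⟩⟩

/-- Isomorphism classes of witness DAGs. -/
def WClass (n : ℕ) (E : Type) (S : E → Finset (Fin n)) : Type :=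
  Quotient (wdSetoid n E S)

/-- The weight of a witness DAG: the product of the probabilities of its labels. -/
noncomputable def wt (P : E → ℝ) (G : WDag n E S) : ℝ := ∏ v, P (G.label v)

theorem wt_invariant (P : E → ℝ) {G G' : WDag n E S} (h : Iso G G') :
    wt P G = wt P G' := by
  obtain ⟨e, hl, _⟩ := h
  exact Fintype.prod_equiv e (fun v => P (G.label v)) (fun v => P (G'.label v))
    (fun v => by show P (G.label v) = P (G'.label (e v)); rw [hl v])

/-- The weight, as a function on isomorphism classes. -/
noncomputable def cwt (P : E → ℝ) : WClass n E S → ℝ :=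
  Quotient.lift (wt P) fun _ _ h => wt_invariant P h

theorem size_invariant {G G' : WDag n E S} (h : Iso G G') : G.size = G'.size := by
  obtain ⟨e, -, -⟩ := h
  simpa using Fintype.card_congr e

/-- The adjusted weight `a_ρ(G) = w(G) (1+ρ)^{|G|}`. -/
noncomputable def awt (P : E → ℝ) (ρ : ℝ) (G : WDag n E S) : ℝ :=
  wt P G * (1 + ρ) ^ G.size

theorem awt_invariant (P : E → ℝ) (ρ : ℝ) {G G' : WDag n E S} (h : Iso G G') :
    awt P ρ G = awt P ρ G' := by
  unfold awt
  rw [wt_invariant P h, size_invariant h]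

/-- The adjusted weight, as a function on isomorphism classes. -/
noncomputable def cawt (P : E → ℝ) (ρ : ℝ) : WClass n E S → ℝ :=
  Quotient.lift (awt P ρ) fun _ _ h => awt_invariant P ρ h

/-- A node is a sink if it has no outgoing edge. -/
def IsSink (G : WDag n E S) (v : Fin G.size) : Prop := ∀ w, ¬ G.edge v w

/-- A witness DAG has a single sink. -/
def SingleSink (G : WDag n E S) : Prop := ∃! v, IsSink G v

/-- A witness DAG has a single sink, labeled by `b`. -/
def SinkLabeled (G : WDag n E S) (b : E) : Prop :=
  ∃ v, IsSink G v ∧ G.label v = b ∧ ∀ w, IsSink G w → w = v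

end WDag

/-- A set of bad events is independent if no two distinct members are dependent. -/
def Indep {n : ℕ} {E : Type} (S : E → Finset (Fin n)) (I : Finset E) : Prop :=
  ∀ b ∈ I, ∀ b' ∈ I, b ≠ b' → ¬ Dep S b b'

/-- The independent-set polynomial `Q(I,p)`. -/
noncomputable def Q {n : ℕ} {E : Type} [Fintype E] (S : E → Finset (Fin n))
    (p : E → ℝ) (I : Finset E) : ℝ :=
  ∑ J ∈ Finset.univ.filter (fun J : Finset E => I ⊆ J ∧ Indep S J),
    (-1 : ℝ) ^ (J.card - I.card) * ∏ b ∈ J, p b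

/-- The Shearer criterion for the probability vector `p`. -/
def Shearer {n : ℕ} {E : Type} [Fintype E] (S : E → Finset (Fin n)) (p : E → ℝ) : Prop :=
  0 < Q S p ∅ ∧ ∀ I : Finset E, Indep S I → 0 ≤ Q S p I


section Algebra
set_option linter.unusedSectionVars false

variable {n : ℕ} {E : Type} [Fintype E] (S : E → Finset (Fin n))

theorem Dep.symm {b b' : E} (h : Dep S b b') : Dep S b' b := by
  unfold Dep at *; rwa [Finset.inter_comm]

theorem Indep.subset {J J' : Finset E} (h : Indep S J') (hJ : J ⊆ J') : Indep S J :=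
  fun b hb b' hb' hne => h b (hJ hb) b' (hJ hb') hne

/-- neighborhood of a set (elements dependent with some member). -/
noncomputable def Dset (J : Finset E) : Finset E :=
  Finset.univ.filter (fun b => ∃ j ∈ J, Dep S b j)

/-- closed neighborhood. -/
noncomputable def Nbar (J : Finset E) : Finset E := J ∪ Dset S J

/-- restricted independence polynomial. -/
noncomputable def Zf (p : E → ℝ) (A : Finset E) : ℝ :=
  ∑ J ∈ A.powerset.filter (fun J => Indep S J),
    (-1 : ℝ) ^ J.card * ∏ b ∈ J, p b

theorem neg_one_pow_sub_real {a b : ℕ} (h : b ≤ a) :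
    (-1 : ℝ) ^ (a - b) = (-1) ^ a * (-1) ^ b := by
  have h2 : (a - b) + b = a := Nat.sub_add_cancel h
  have : (-1 : ℝ) ^ ((a-b) + b) = (-1:ℝ)^(a-b) * (-1)^b := pow_add _ _ _
  rw [h2] at this
  have hb : ((-1:ℝ)^b) * ((-1:ℝ)^b) = 1 := by
    rw [← pow_add]; exact Even.neg_one_pow ⟨b, by ring⟩
  calc (-1 : ℝ) ^ (a - b) = (-1:ℝ)^(a-b) * ((-1:ℝ)^b * (-1:ℝ)^b) := by rw [hb, mul_one]
    _ = ((-1:ℝ)^(a-b) * (-1:ℝ)^b) * (-1:ℝ)^b := by ring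
    _ = (-1)^a * (-1)^b := by rw [← this]

theorem sum_powerset_neg_one_real (M : Finset E) :
    ∑ J ∈ M.powerset, (-1 : ℝ) ^ J.card = if M = ∅ then 1 else 0 := by
  have := Finset.sum_powerset_neg_one_pow_card (x := M)
  calc ∑ J ∈ M.powerset, (-1 : ℝ) ^ J.card
      = ((∑ J ∈ M.powerset, (-1 : ℤ) ^ J.card : ℤ) : ℝ) := by push_cast; rfl
    _ = if M = ∅ then 1 else 0 := by rw [this]; split <;> norm_num

/-- master reindexing lemma. -/
theorem reindex (p : E → ℝ) (f : ℕ → ℝ) {A I : Finset E} (hI : Indep S I) (hIA : I ⊆ A) :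
    ∑ J ∈ A.powerset.filter (fun J => Indep S J ∧ I ⊆ J), f J.card * ∏ b ∈ J, p b
    = (∏ b ∈ I, p b) *
      ∑ K ∈ ((A \ Nbar S I).powerset.filter (fun K => Indep S K)),
        f (K.card + I.card) * ∏ b ∈ K, p b := by
  rw [Finset.mul_sum]
  refine Finset.sum_nbij' (fun J => J \ I) (fun K => I ∪ K) ?_ ?_ ?_ ?_ ?_
  · intro J hJ
    simp only [Finset.mem_filter, Finset.mem_powerset] at hJ ⊢
    obtain ⟨hJA, hJind, hIJ⟩ := hJ
    refine ⟨?_, hJind.subset S (Finset.sdiff_subset)⟩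
    intro x hx
    rw [Finset.mem_sdiff] at hx ⊢
    refine ⟨hJA hx.1, ?_⟩
    intro hxN
    rw [Nbar, Finset.mem_union] at hxN
    rcases hxN with h1 | h1
    · exact hx.2 h1
    · rw [Dset, Finset.mem_filter] at h1
      obtain ⟨-, j, hjI, hdep⟩ := h1
      exact hJind x hx.1 j (hIJ hjI) (fun he => hx.2 (he ▸ hjI)) hdep
  · intro K hK
    simp only [Finset.mem_filter, Finset.mem_powerset] at hK ⊢
    obtain ⟨hKA, hKind⟩ := hK
    have hdisj : ∀ x ∈ K, x ∉ Nbar S I := fun x hx => (Finset.mem_sdiff.mp (hKA hx)).2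
    constructor
    · exact Finset.union_subset hIA (fun x hx => (Finset.mem_sdiff.mp (hKA hx)).1)
    constructor
    · intro b hb b' hb' hne hdep
      rw [Finset.mem_union] at hb hb'
      rcases hb with hb | hb <;> rcases hb' with hb' | hb'
      · exact hI b hb b' hb' hne hdep
      · -- b ∈ I, b' ∈ K : Dep b b' gives b' ∈ Dset I
        exact (hdisj b' hb') (by
          rw [Nbar, Finset.mem_union, Dset, Finset.mem_filter]
          exact Or.inr ⟨Finset.mem_univ _, b, hb, hdep.symm S⟩)
      · exact (hdisj b hb) (by
          rw [Nbar, Finset.mem_union, Dset, Finset.mem_filter]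
          exact Or.inr ⟨Finset.mem_univ _, b', hb', hdep⟩)
      · exact hKind b hb b' hb' hne hdep
    · exact Finset.subset_union_left
  · intro J hJ
    simp only [Finset.mem_filter, Finset.mem_powerset] at hJ
    exact Finset.union_sdiff_of_subset hJ.2.2
  · intro K hK
    simp only [Finset.mem_filter, Finset.mem_powerset] at hK
    have : Disjoint I K := by
      refine Finset.disjoint_left.mpr (fun x hxI hxK => ?_)
      have := (Finset.mem_sdiff.mp (hK.1 hxK)).2
      exact this (Finset.mem_union_left _ hxI)
    exact Finset.union_sdiff_cancel_left this
  · intro J hJ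
    simp only [Finset.mem_filter, Finset.mem_powerset] at hJ
    obtain ⟨hJA, hJind, hIJ⟩ := hJ
    have hcard : (J \ I).card + I.card = J.card := Finset.card_sdiff_add_card_eq_card hIJ
    have hprod : (∏ b ∈ J \ I, p b) * ∏ b ∈ I, p b = ∏ b ∈ J, p b := Finset.prod_sdiff hIJ
    rw [hcard, ← hprod]; ring

end Algebra
section Fund
set_option linter.unusedSectionVars false
variable {n : ℕ} {E : Type} [Fintype E] (S : E → Finset (Fin n))

theorem fund (p : E → ℝ) {A W : Finset E} (hWA : W ⊆ A) :
    ∑ J ∈ W.powerset.filter (fun J => Indep S J),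
      (∏ b ∈ J, p b) * Zf S p (A \ Nbar S J) = Zf S p (A \ W) := by
  have step1 : ∀ J ∈ W.powerset.filter (fun J => Indep S J),
      (∏ b ∈ J, p b) * Zf S p (A \ Nbar S J)
      = ∑ J' ∈ A.powerset.filter (fun J' => Indep S J' ∧ J ⊆ J'),
          (-1 : ℝ) ^ (J'.card - J.card) * ∏ b ∈ J', p b := by
    intro J hJ
    simp only [Finset.mem_filter, Finset.mem_powerset] at hJ
    have := reindex S p (fun c => (-1 : ℝ) ^ (c - J.card)) hJ.2 (hJ.1.trans hWA)
    rw [this]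
    congr 1
    rw [Zf]
    refine Finset.sum_congr rfl (fun K hK => ?_)
    simp [Nat.add_sub_cancel]
  rw [Finset.sum_congr rfl step1]
  rw [Finset.sum_comm' (s := W.powerset.filter (fun J => Indep S J))
    (t := fun J => A.powerset.filter (fun J' => Indep S J' ∧ J ⊆ J'))
    (t' := A.powerset.filter (fun J' => Indep S J'))
    (s' := fun J' => (J' ∩ W).powerset)
    (by
      intro J J'
      simp only [Finset.mem_filter, Finset.mem_powerset]
      constructor
      · rintro ⟨⟨hJW, hJind⟩, hJ'A, hJ'ind, hJJ'⟩
        exact ⟨Finset.subset_inter hJJ' hJW, hJ'A, hJ'ind⟩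
      · rintro ⟨hsub, hJ'A, hJ'ind⟩
        have h1 : J ⊆ J' := hsub.trans Finset.inter_subset_left
        have h2 : J ⊆ W := hsub.trans Finset.inter_subset_right
        exact ⟨⟨h2, hJ'ind.subset S h1⟩, hJ'A, hJ'ind, h1⟩)]
  have step3 : ∀ J' ∈ A.powerset.filter (fun J' => Indep S J'),
      ∑ J ∈ (J' ∩ W).powerset, (-1 : ℝ) ^ (J'.card - J.card) * ∏ b ∈ J', p b
      = (if J' ∩ W = ∅ then (1:ℝ) else 0) * ((-1 : ℝ) ^ J'.card * ∏ b ∈ J', p b) := by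
    intro J' hJ'
    have : ∀ J ∈ (J' ∩ W).powerset, (-1 : ℝ) ^ (J'.card - J.card) * ∏ b ∈ J', p b
        = (-1 : ℝ) ^ J.card * ((-1 : ℝ) ^ J'.card * ∏ b ∈ J', p b) := by
      intro J hJ
      rw [Finset.mem_powerset] at hJ
      have hle : J.card ≤ J'.card :=
        Finset.card_le_card (hJ.trans Finset.inter_subset_left)
      rw [neg_one_pow_sub_real hle]; ring
    rw [Finset.sum_congr rfl this, ← Finset.sum_mul, sum_powerset_neg_one_real]
  rw [Finset.sum_congr rfl step3]
  have hset : (A.powerset.filter (fun J' => Indep S J')).filter (fun J' => J' ∩ W = ∅)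
      = (A \ W).powerset.filter (fun J' => Indep S J') := by
    ext J'
    simp only [Finset.mem_filter, Finset.mem_powerset]
    constructor
    · rintro ⟨⟨hA, hind⟩, hint⟩
      refine ⟨fun x hx => Finset.mem_sdiff.mpr ⟨hA hx, fun hxW => ?_⟩, hind⟩
      exact Finset.notMem_empty x (hint ▸ Finset.mem_inter.mpr ⟨hx, hxW⟩)
    · rintro ⟨hA, hind⟩
      refine ⟨⟨fun x hx => (Finset.mem_sdiff.mp (hA hx)).1, hind⟩, ?_⟩
      ext x
      simp only [Finset.mem_inter, Finset.notMem_empty, iff_false, not_and]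
      intro hx
      exact (Finset.mem_sdiff.mp (hA hx)).2
  calc ∑ J' ∈ A.powerset.filter (fun J' => Indep S J'),
        (if J' ∩ W = ∅ then (1:ℝ) else 0) * ((-1 : ℝ) ^ J'.card * ∏ b ∈ J', p b)
      = ∑ J' ∈ A.powerset.filter (fun J' => Indep S J'),
          (if J' ∩ W = ∅ then ((-1 : ℝ) ^ J'.card * ∏ b ∈ J', p b) else 0) := by
        refine Finset.sum_congr rfl (fun J' _ => ?_)
        split <;> simp
    _ = ∑ J' ∈ (A.powerset.filter (fun J' => Indep S J')).filter (fun J' => J' ∩ W = ∅),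
          (-1 : ℝ) ^ J'.card * ∏ b ∈ J', p b := (Finset.sum_filter _ _).symm
    _ = Zf S p (A \ W) := by rw [hset, Zf]

end Fund
section Master
set_option linter.unusedSectionVars false
variable {n : ℕ} {E : Type} [Fintype E] (S : E → Finset (Fin n))

theorem Q_eq (p : E → ℝ) {I : Finset E} (hI : Indep S I) :
    Q S p I = (∏ b ∈ I, p b) * Zf S p (Finset.univ \ Nbar S I) := by
  rw [Q, Zf]
  have h1 : (Finset.univ.filter (fun J : Finset E => I ⊆ J ∧ Indep S J))
      = (Finset.univ : Finset E).powerset.filter (fun J => Indep S J ∧ I ⊆ J) := by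
    rw [Finset.powerset_univ]
    exact Finset.filter_congr (fun J _ => by tauto)
  rw [h1]
  have := reindex S p (fun c => (-1 : ℝ) ^ (c - I.card)) hI (Finset.subset_univ I)
  rw [this]
  congr 1
  refine Finset.sum_congr rfl (fun K hK => ?_)
  simp [Nat.add_sub_cancel]

/-- weak Shearer hypotheses packaged on `Zf`. -/
def WS (p : E → ℝ) : Prop :=
  0 < Zf S p Finset.univ ∧
    ∀ J : Finset E, Indep S J →
      0 ≤ (∏ b ∈ J, p b) * Zf S p (Finset.univ \ Nbar S J)

theorem WS_of_Shearer {p : E → ℝ} (h : Shearer S p) : WS S p := by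
  constructor
  · have := h.1
    rw [Q_eq S p (fun b hb => by simp at hb)] at this
    simpa [Nbar, Dset] using this
  · intro J hJ
    have := h.2 J hJ
    rwa [Q_eq S p hJ] at this

theorem Zf_sdiff_mono {p : E → ℝ} (hp : WS S p) {U U' : Finset E} (h : U ⊆ U') :
    Zf S p (Finset.univ \ U) ≤ Zf S p (Finset.univ \ U') := by
  rw [← fund S p (Finset.subset_univ U), ← fund S p (Finset.subset_univ U')]
  refine Finset.sum_le_sum_of_subset_of_nonneg ?_ ?_
  · exact Finset.filter_subset_filter _ (Finset.powerset_mono.mpr h)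
  · intro J hJ _
    simp only [Finset.mem_filter, Finset.mem_powerset] at hJ
    exact hp.2 J hJ.2

theorem Zf_master {p : E → ℝ} (hp : WS S p) (A : Finset E) :
    Zf S p Finset.univ ≤ Zf S p A := by
  have h1 : A = Finset.univ \ (Finset.univ \ A) := by
    rw [Finset.sdiff_sdiff_self_left, Finset.univ_inter]
  rw [h1]
  have := Zf_sdiff_mono S hp (Finset.empty_subset (Finset.univ \ A))
  simpa using this

theorem Nbar_empty : Nbar S (∅ : Finset E) = ∅ := by
  simp [Nbar, Dset]

theorem clique_filter {V A : Finset E} (hV : ∀ b ∈ V, ∀ b' ∈ V, Dep S b b') :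
    (V ∩ A).powerset.filter (fun J => Indep S J)
      = insert ∅ ((V ∩ A).image (fun B => {B})) := by
  ext J
  simp only [Finset.mem_filter, Finset.mem_powerset, Finset.mem_insert, Finset.mem_image]
  constructor
  · rintro ⟨hJVA, hJind⟩
    rcases Finset.eq_empty_or_nonempty J with he | ⟨B, hB⟩
    · exact Or.inl he
    · refine Or.inr ⟨B, hJVA hB, ?_⟩
      symm
      rw [Finset.eq_singleton_iff_unique_mem]
      refine ⟨hB, fun b hb => ?_⟩
      by_contra hne
      exact hJind b hb B hB hne
        (hV b (Finset.mem_inter.mp (hJVA hb)).1 B (Finset.mem_inter.mp (hJVA hB)).1)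
  · rintro (rfl | ⟨B, hB, rfl⟩)
    · exact ⟨Finset.empty_subset _, fun b hb => by simp at hb⟩
    · refine ⟨Finset.singleton_subset_iff.mpr hB, fun b hb b' hb' hne => ?_⟩
      simp only [Finset.mem_singleton] at hb hb'
      exact absurd (hb.trans hb'.symm) hne

theorem fund_clique (p : E → ℝ) {V A : Finset E} (hV : ∀ b ∈ V, ∀ b' ∈ V, Dep S b b') :
    Zf S p (A \ V) = Zf S p A + ∑ B ∈ V ∩ A, p B * Zf S p (A \ Nbar S {B}) := by
  have hAV : A \ (V ∩ A) = A \ V := by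
    ext x; simp only [Finset.mem_sdiff, Finset.mem_inter]; tauto
  rw [← hAV, ← fund S p (Finset.inter_subset_right), clique_filter S hV]
  rw [Finset.sum_insert (by
    simp only [Finset.mem_image]
    rintro ⟨B, -, hB⟩
    exact Finset.singleton_ne_empty B hB)]
  rw [Finset.sum_image (fun x _ y _ h => Finset.singleton_injective h)]
  simp [Nbar_empty]

end Master
section Calc
set_option linter.unusedSectionVars false
variable {n : ℕ} {E : Type} [Fintype E] (S : E → Finset (Fin n))

/-- scaled independence polynomial as a function of the scaling. -/
noncomputable def Ff (p : E → ℝ) (A : Finset E) (x : ℝ) : ℝ :=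
  ∑ J ∈ A.powerset.filter (fun J => Indep S J),
    (-1 : ℝ) ^ J.card * x ^ J.card * ∏ b ∈ J, p b

theorem Ff_eq_Zf (p : E → ℝ) (A : Finset E) (x : ℝ) :
    Ff S p A x = Zf S (fun b => x * p b) A := by
  rw [Ff, Zf]
  refine Finset.sum_congr rfl (fun J _ => ?_)
  rw [Finset.prod_mul_distrib, Finset.prod_const]
  ring

theorem Ff_one (p : E → ℝ) (A : Finset E) : Ff S p A 1 = Zf S p A := by
  rw [Ff_eq_Zf]; simp

theorem Ff_hasDeriv (p : E → ℝ) (A : Finset E) (x : ℝ) :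
    HasDerivAt (Ff S p A)
      (-(∑ b ∈ A, p b * Ff S p (A \ Nbar S {b}) x)) x := by
  have h1 : HasDerivAt (Ff S p A)
      (∑ J ∈ A.powerset.filter (fun J => Indep S J),
        (-1 : ℝ) ^ J.card * ((J.card : ℝ) * x ^ (J.card - 1)) * ∏ b ∈ J, p b) x := by
    apply HasDerivAt.fun_sum
    intro J _
    have := (hasDerivAt_pow J.card x).const_mul ((-1 : ℝ) ^ J.card)
    have := this.mul_const (∏ b ∈ J, p b)
    convert this using 1
  have h2 : ∑ J ∈ A.powerset.filter (fun J => Indep S J),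
        (-1 : ℝ) ^ J.card * ((J.card : ℝ) * x ^ (J.card - 1)) * ∏ b ∈ J, p b
      = -(∑ b ∈ A, p b * Ff S p (A \ Nbar S {b}) x) := by
    have key : ∀ J ∈ A.powerset.filter (fun J => Indep S J),
        (-1 : ℝ) ^ J.card * ((J.card : ℝ) * x ^ (J.card - 1)) * ∏ b ∈ J, p b
        = ∑ b ∈ J, (fun c : ℕ => (-1 : ℝ) ^ c * x ^ (c - 1)) J.card * ∏ b ∈ J, p b := by
      intro J _
      rw [Finset.sum_const, nsmul_eq_mul]
      ring
    rw [Finset.sum_congr rfl key]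
    rw [Finset.sum_comm' (s := A.powerset.filter (fun J => Indep S J))
      (t := fun J => J)
      (t' := A)
      (s' := fun b => A.powerset.filter (fun J => Indep S J ∧ {b} ⊆ J))
      (by
        intro J b
        simp only [Finset.mem_filter, Finset.mem_powerset, Finset.singleton_subset_iff]
        constructor
        · rintro ⟨⟨hJA, hind⟩, hbJ⟩
          exact ⟨⟨hJA, hind, hbJ⟩, hJA hbJ⟩
        · rintro ⟨⟨hJA, hind, hbJ⟩, -⟩
          exact ⟨⟨hJA, hind⟩, hbJ⟩)]
    rw [← Finset.sum_neg_distrib]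
    refine Finset.sum_congr rfl (fun b hb => ?_)
    have hsing : Indep S ({b} : Finset E) := by
      intro y hy y' hy' hne
      simp only [Finset.mem_singleton] at hy hy'
      exact absurd (hy.trans hy'.symm) hne
    have := reindex S p (fun c : ℕ => (-1 : ℝ) ^ c * x ^ (c - 1)) hsing
      (Finset.singleton_subset_iff.mpr (by exact hb))
    rw [this]
    rw [Ff]
    have : ∀ K ∈ (A \ Nbar S {b}).powerset.filter (fun K => Indep S K),
        (fun c : ℕ => (-1 : ℝ) ^ c * x ^ (c - 1)) (K.card + ({b} : Finset E).card)
          * ∏ b' ∈ K, p b'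
        = -((-1 : ℝ) ^ K.card * x ^ K.card * ∏ b' ∈ K, p b') := by
      intro K _
      simp only [Finset.card_singleton, Nat.add_sub_cancel]
      rw [pow_succ]
      ring
    rw [Finset.sum_congr rfl this, Finset.sum_neg_distrib]
    rw [Finset.prod_singleton]
    ring
  rw [h2] at h1
  exact h1

end Calc
section Calc2
set_option linter.unusedSectionVars false
variable {n : ℕ} {E : Type} [Fintype E] (S : E → Finset (Fin n))

theorem mem_Nbar_self (b : E) : b ∈ Nbar S ({b} : Finset E) :=
  Finset.mem_union_left _ (Finset.mem_singleton_self b)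

theorem pos_all (p : E → ℝ) (hp0 : ∀ b, 0 ≤ p b) (hws : WS S p) :
    ∀ (A : Finset E), ∀ x ∈ Set.Icc (0:ℝ) 1, Zf S p Finset.univ ≤ Ff S p A x := by
  intro A
  induction A using Finset.strongInduction with
  | _ A ih =>
  have hanti : AntitoneOn (Ff S p A) (Set.Icc (0:ℝ) 1) := by
    refine antitoneOn_of_deriv_nonpos (convex_Icc 0 1) ?_ ?_ ?_
    · exact fun x _ => ((Ff_hasDeriv S p A x).continuousAt).continuousWithinAt
    · exact fun x _ => (Ff_hasDeriv S p A x).differentiableAt.differentiableWithinAt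
    · intro x hx
      rw [interior_Icc] at hx
      rw [(Ff_hasDeriv S p A x).deriv]
      rw [neg_nonpos]
      refine Finset.sum_nonneg (fun b hb => ?_)
      have hsub : A \ Nbar S {b} ⊂ A := by
        refine Finset.ssubset_iff_of_subset Finset.sdiff_subset |>.mpr ?_
        exact ⟨b, hb, fun hmem => (Finset.mem_sdiff.mp hmem).2 (mem_Nbar_self S b)⟩
      have := ih _ hsub x ⟨le_of_lt hx.1, le_of_lt hx.2⟩
      exact mul_nonneg (hp0 b) (le_trans (le_of_lt hws.1) this)
  intro x hx
  have h1 : Ff S p A 1 ≤ Ff S p A x := hanti hx (Set.mem_Icc.mpr ⟨zero_le_one, le_refl 1⟩) hx.2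
  rw [Ff_one] at h1
  exact le_trans (Zf_master S hws A) h1

theorem delta_all (p : E → ℝ) (hp0 : ∀ b, 0 ≤ p b) (hws : WS S p)
    {V : Finset E} (hV : ∀ b ∈ V, ∀ b' ∈ V, Dep S b b') :
    ∀ (A : Finset E), ∀ x ∈ Set.Icc (0:ℝ) 1,
      Zf S p Finset.univ ≤
        Ff S p (A \ V) x - ∑ B ∈ V ∩ A, p B * Ff S p (A \ Nbar S {B}) x := by
  intro A
  induction A using Finset.strongInduction with
  | _ A ih =>
  set Δ : ℝ → ℝ := fun x =>
    Ff S p (A \ V) x - ∑ B ∈ V ∩ A, p B * Ff S p (A \ Nbar S {B}) x with hΔ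
  have hVsubNbar : ∀ B ∈ V, V ⊆ Nbar S {B} := by
    intro B hB b hb
    refine Finset.mem_union_right _ ?_
    rw [Dset, Finset.mem_filter]
    exact ⟨Finset.mem_univ _, B, Finset.mem_singleton_self B, hV b hb B hB⟩
  have hder : ∀ x : ℝ, HasDerivAt Δ
      (-(∑ b ∈ A \ V, p b *
        (Ff S p ((A \ Nbar S {b}) \ V) x
          - ∑ B ∈ V ∩ (A \ Nbar S {b}), p B * Ff S p ((A \ Nbar S {b}) \ Nbar S {B}) x))) x := by
    intro x
    have h1 := Ff_hasDeriv S p (A \ V) x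
    have h2 : HasDerivAt (fun y => ∑ B ∈ V ∩ A, p B * Ff S p (A \ Nbar S {B}) y)
        (∑ B ∈ V ∩ A, p B * (-(∑ b ∈ (A \ Nbar S {B}), p b
            * Ff S p ((A \ Nbar S {B}) \ Nbar S {b}) x))) x := by
      apply HasDerivAt.fun_sum
      intro B _
      exact (Ff_hasDeriv S p (A \ Nbar S {B}) x).const_mul (p B)
    have h3 := h1.sub h2
    refine h3.congr_deriv ?_
    symm
    have hswap : ∑ B ∈ V ∩ A, p B * -∑ b ∈ (A \ Nbar S {B}), p b
            * Ff S p ((A \ Nbar S {B}) \ Nbar S {b}) x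
        = -∑ B ∈ V ∩ A, ∑ b ∈ (A \ Nbar S {B}),
            p B * (p b * Ff S p ((A \ Nbar S {B}) \ Nbar S {b}) x) := by
      rw [← Finset.sum_neg_distrib]
      refine Finset.sum_congr rfl (fun B _ => ?_)
      rw [mul_neg, Finset.mul_sum]
    have hcomm : ∑ B ∈ V ∩ A, ∑ b ∈ (A \ Nbar S {B}),
            p B * (p b * Ff S p ((A \ Nbar S {B}) \ Nbar S {b}) x)
        = ∑ b ∈ A \ V, ∑ B ∈ V ∩ (A \ Nbar S {b}),
            p B * (p b * Ff S p ((A \ Nbar S {B}) \ Nbar S {b}) x) := by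
      refine Finset.sum_comm' ?_
      intro B b
      simp only [Finset.mem_inter, Finset.mem_sdiff]
      constructor
      · rintro ⟨⟨hBV, hBA⟩, hbA, hbN⟩
        have hbV : b ∉ V := fun hbV => hbN (hVsubNbar B hBV hbV)
        have hBNb : B ∉ Nbar S {b} := by
          intro hmem
          rcases Finset.mem_union.mp hmem with h | h
          · rw [Finset.mem_singleton] at h
            exact hbN (h ▸ mem_Nbar_self S b)
          · rw [Dset, Finset.mem_filter] at h
            obtain ⟨-, j, hj, hdep⟩ := h
            rw [Finset.mem_singleton] at hj
            subst hj
            refine hbN (Finset.mem_union_right _ ?_)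
            rw [Dset, Finset.mem_filter]
            exact ⟨Finset.mem_univ _, B, Finset.mem_singleton_self _, hdep.symm S⟩
        exact ⟨⟨hBV, hBA, hBNb⟩, hbA, hbV⟩
      · rintro ⟨⟨hBV, hBA, hBN⟩, hbA, hbV⟩
        have hbNB : b ∉ Nbar S {B} := by
          intro hmem
          rcases Finset.mem_union.mp hmem with h | h
          · rw [Finset.mem_singleton] at h
            exact hBN (h ▸ mem_Nbar_self S B)
          · rw [Dset, Finset.mem_filter] at h
            obtain ⟨-, j, hj, hdep⟩ := h
            rw [Finset.mem_singleton] at hj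
            subst hj
            refine hBN (Finset.mem_union_right _ ?_)
            rw [Dset, Finset.mem_filter]
            exact ⟨Finset.mem_univ _, b, Finset.mem_singleton_self _, hdep.symm S⟩
        exact ⟨⟨hBV, hBA⟩, hbA, hbNB⟩

    rw [hswap, hcomm, sub_neg_eq_add]
    have hsd : ∀ b B : E, (A \ Nbar S {B}) \ Nbar S {b} = (A \ Nbar S {b}) \ Nbar S {B} := by
      intro b B
      ext y
      simp only [Finset.mem_sdiff]
      tauto
    have hsd2 : ∀ b : E, (A \ V) \ Nbar S {b} = (A \ Nbar S {b}) \ V := by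
      intro b
      ext y
      simp only [Finset.mem_sdiff]
      tauto
    rw [← Finset.sum_neg_distrib, ← Finset.sum_neg_distrib, ← Finset.sum_add_distrib]
    refine Finset.sum_congr rfl (fun b hb => ?_)
    rw [hsd2 b]
    have hterm : ∀ B ∈ V ∩ (A \ Nbar S {b}),
        p B * (p b * Ff S p ((A \ Nbar S {B}) \ Nbar S {b}) x)
        = p b * (p B * Ff S p ((A \ Nbar S {b}) \ Nbar S {B}) x) := by
      intro B _
      rw [hsd b B]; ring
    rw [Finset.sum_congr rfl hterm, ← Finset.mul_sum]
    ring
  have hanti : AntitoneOn Δ (Set.Icc (0:ℝ) 1) := by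
    refine antitoneOn_of_deriv_nonpos (convex_Icc 0 1) ?_ ?_ ?_
    · exact fun x _ => ((hder x).continuousAt).continuousWithinAt
    · exact fun x _ => (hder x).differentiableAt.differentiableWithinAt
    · intro x hx
      rw [interior_Icc] at hx
      rw [(hder x).deriv, neg_nonpos]
      refine Finset.sum_nonneg (fun b hb => ?_)
      have hbA : b ∈ A := (Finset.mem_sdiff.mp hb).1
      have hsub : A \ Nbar S {b} ⊂ A := by
        refine Finset.ssubset_iff_of_subset Finset.sdiff_subset |>.mpr ?_
        exact ⟨b, hbA, fun hmem => (Finset.mem_sdiff.mp hmem).2 (mem_Nbar_self S b)⟩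
      have := ih _ hsub x ⟨le_of_lt hx.1, le_of_lt hx.2⟩
      exact mul_nonneg (hp0 b) (le_trans (le_of_lt hws.1) this)
  intro x hx
  have h1 : Δ 1 ≤ Δ x := hanti hx (Set.mem_Icc.mpr ⟨zero_le_one, le_refl 1⟩) hx.2
  have hD1 : Δ 1 = Zf S p A := by
    rw [hΔ]
    simp only
    have : ∀ B ∈ V ∩ A, p B * Ff S p (A \ Nbar S {B}) 1 = p B * Zf S p (A \ Nbar S {B}) := by
      intro B _; rw [Ff_one]
    rw [Ff_one, Finset.sum_congr rfl this]
    have := fund_clique S p (A := A) hV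
    linarith [this]
  have := le_trans (Zf_master S hws A) (hD1 ▸ h1)
  exact this

end Calc2
section FinalC
set_option linter.unusedSectionVars false
variable {n : ℕ} {E : Type} [Fintype E] (S : E → Finset (Fin n))

theorem finalC (P : E → ℝ) (hP0 : ∀ b, 0 ≤ P b) (ε ρ : ℝ)
    (hslack : Shearer S (fun b => (1 + ε) * P b))
    (hρ0 : 0 ≤ ρ) (hρε : ρ < ε)
    (V : Finset E) (hV : ∀ b ∈ V, ∀ b' ∈ V, Dep S b b') :
    0 < Zf S (fun b => (1 + ρ) * P b) Finset.univ ∧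
    WS S (fun b => (1 + ρ) * P b) ∧
    ∑ B ∈ V, (1 + ρ) * P B * Zf S (fun b => (1 + ρ) * P b) (Finset.univ \ Dset S {B})
      ≤ ((1 + ρ) / (ε - ρ)) * Zf S (fun b => (1 + ρ) * P b) Finset.univ := by
  have hε1 : (0:ℝ) < 1 + ε := by linarith
  have hρ1 : (0:ℝ) < 1 + ρ := by linarith
  set p'' : E → ℝ := fun b => (1 + ε) * P b with hp''
  set p' : E → ℝ := fun b => (1 + ρ) * P b with hp'
  set c : ℝ := (1 + ρ) / (1 + ε) with hc
  have hc0 : 0 ≤ c := le_of_lt (div_pos hρ1 hε1)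
  have hc1 : c < 1 := (div_lt_one hε1).mpr (by linarith)
  have hcIcc : c ∈ Set.Icc (0:ℝ) 1 := ⟨hc0, le_of_lt hc1⟩
  have hp'eq : (fun b => c * p'' b) = p' := by
    funext b
    show (1 + ρ) / (1 + ε) * ((1 + ε) * P b) = (1 + ρ) * P b
    field_simp
  have hp''0 : ∀ b, 0 ≤ p'' b := fun b => mul_nonneg (le_of_lt hε1) (hP0 b)
  have hp'0 : ∀ b, 0 ≤ p' b := fun b => mul_nonneg (le_of_lt hρ1) (hP0 b)
  have hws'' : WS S p'' := WS_of_Shearer S hslack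
  -- all restricted polynomials at p' are bounded below by Zf p'' univ > 0
  have hZ' : ∀ A : Finset E, Zf S p'' Finset.univ ≤ Zf S p' A := by
    intro A
    have := pos_all S p'' hp''0 hws'' A c hcIcc
    rwa [Ff_eq_Zf, hp'eq] at this
  have hZ'pos : ∀ A : Finset E, 0 < Zf S p' A := fun A => lt_of_lt_of_le hws''.1 (hZ' A)
  have hws' : WS S p' := by
    refine ⟨hZ'pos _, fun J _ => ?_⟩
    exact mul_nonneg (Finset.prod_nonneg (fun b _ => hp'0 b)) (le_of_lt (hZ'pos _))
  refine ⟨hZ'pos _, hws', ?_⟩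
  -- delta bound at x = c
  have hdelta := delta_all S p'' hp''0 hws'' hV Finset.univ c hcIcc
  rw [Ff_eq_Zf, hp'eq] at hdelta
  have hdelta' : ∑ B ∈ V ∩ Finset.univ, p'' B * Zf S p' (Finset.univ \ Nbar S {B})
      ≤ Zf S p' (Finset.univ \ V) := by
    have h0 : (0:ℝ) < Zf S p'' Finset.univ := hws''.1
    have : ∀ B ∈ V ∩ Finset.univ,
        p'' B * Ff S p'' (Finset.univ \ Nbar S {B}) c
        = p'' B * Zf S p' (Finset.univ \ Nbar S {B}) := by
      intro B _
      rw [Ff_eq_Zf, hp'eq]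
    rw [Finset.sum_congr rfl this] at hdelta
    linarith
  rw [Finset.inter_univ] at hdelta'
  -- multiply by c
  have hY : ∑ B ∈ V, p' B * Zf S p' (Finset.univ \ Nbar S {B})
      ≤ c * Zf S p' (Finset.univ \ V) := by
    calc ∑ B ∈ V, p' B * Zf S p' (Finset.univ \ Nbar S {B})
        = c * ∑ B ∈ V, p'' B * Zf S p' (Finset.univ \ Nbar S {B}) := by
          rw [Finset.mul_sum]
          refine Finset.sum_congr rfl (fun B _ => ?_)
          rw [← hp'eq]
          ring
      _ ≤ c * Zf S p' (Finset.univ \ V) := by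
          apply mul_le_mul_of_nonneg_left hdelta' hc0
  -- clique expansion at p'
  have hfc := fund_clique S p' (A := Finset.univ) hV
  rw [Finset.inter_univ] at hfc
  set Y : ℝ := ∑ B ∈ V, p' B * Zf S p' (Finset.univ \ Nbar S {B}) with hYdef
  have hYnn : 0 ≤ Y := by
    refine Finset.sum_nonneg (fun B _ => ?_)
    exact mul_nonneg (hp'0 B) (le_of_lt (hZ'pos _))
  have hY2 : Y ≤ c * (Zf S p' Finset.univ + Y) := by rw [← hfc]; exact hY
  have hY3 : (1 - c) * Y ≤ c * Zf S p' Finset.univ := by nlinarith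
  have hc2 : 1 - c = (ε - ρ) / (1 + ε) := by rw [hc]; field_simp; ring
  have hfrac : c / (1 - c) = (1 + ρ) / (ε - ρ) := by
    rw [hc2, hc]
    rw [div_div_div_eq]
    rw [mul_comm (1+ρ) (1+ε), mul_div_mul_left _ _ (ne_of_gt hε1)]
  have h1c : 0 < 1 - c := by linarith
  have hY4 : Y ≤ ((1 + ρ) / (ε - ρ)) * Zf S p' Finset.univ := by
    rw [← hfrac, div_mul_eq_mul_div, le_div_iff₀ h1c]
    calc Y * (1 - c) = (1 - c) * Y := by ring
      _ ≤ c * Zf S p' Finset.univ := hY3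
  -- finally pass from Nbar to Dset
  calc ∑ B ∈ V, p' B * Zf S p' (Finset.univ \ Dset S {B})
      ≤ Y := by
        refine Finset.sum_le_sum (fun B _ => ?_)
        refine mul_le_mul_of_nonneg_left ?_ (hp'0 B)
        exact Zf_sdiff_mono S hws' (Finset.subset_union_right)
    _ ≤ _ := hY4

end FinalC
section Seq
set_option linter.unusedSectionVars false
variable {n : ℕ} {E : Type} [Fintype E] (S : E → Finset (Fin n))

/-- validity of a layered sequence relative to a set of allowed sink labels. -/
def ValidFrom : Finset E → List (Finset E) → Prop
  | _, [] => True
  | A, J :: σ => J.Nonempty ∧ Indep S J ∧ J ⊆ A ∧ ValidFrom (Dset S J) σ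

/-- weight of a layered sequence. -/
noncomputable def wseq (p : E → ℝ) (σ : List (Finset E)) : ℝ :=
  (σ.map (fun J => ∏ b ∈ J, p b)).prod

/-- total size of a layered sequence. -/
def sizeSeq (σ : List (Finset E)) : ℕ := (σ.map Finset.card).sum

theorem wseq_nil (p : E → ℝ) : wseq p [] = 1 := rfl

theorem wseq_cons (p : E → ℝ) (J : Finset E) (σ : List (Finset E)) :
    wseq p (J :: σ) = (∏ b ∈ J, p b) * wseq p σ := by
  simp [wseq]

theorem wseq_nonneg (p : E → ℝ) (hp0 : ∀ b, 0 ≤ p b) (σ : List (Finset E)) :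
    0 ≤ wseq p σ := by
  induction σ with
  | nil => rw [wseq_nil]; norm_num
  | cons J σ ih =>
    rw [wseq_cons]
    exact mul_nonneg (Finset.prod_nonneg (fun b _ => hp0 b)) ih

theorem seqbound (p : E → ℝ) (hp0 : ∀ b, 0 ≤ p b) (hws : WS S p) :
    ∀ k : ℕ, ∀ A : Finset E, ∀ F : Finset (List (Finset E)),
      (∀ σ ∈ F, ValidFrom S A σ ∧ sizeSeq σ ≤ k) →
      (∑ σ ∈ F, wseq p σ) * Zf S p Finset.univ ≤ Zf S p (Finset.univ \ A) := by
  have hZuniv : 0 < Zf S p Finset.univ := hws.1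
  have hbase : ∀ A : Finset E, Zf S p Finset.univ ≤ Zf S p (Finset.univ \ A) := by
    intro A
    have := Zf_sdiff_mono S hws (Finset.empty_subset A)
    simpa using this
  intro k
  induction k with
  | zero =>
    intro A F hF
    have hsub : F ⊆ {[]} := by
      intro σ hσ
      rw [Finset.mem_singleton]
      obtain ⟨hval, hsz⟩ := hF σ hσ
      cases σ with
      | nil => rfl
      | cons J σ' =>
        exfalso
        obtain ⟨hne, -, -, -⟩ := hval
        have : 1 ≤ sizeSeq (J :: σ') := by
          have := Finset.card_pos.mpr hne
          simp only [sizeSeq, List.map_cons, List.sum_cons]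
          omega
        omega
    have hsum : ∑ σ ∈ F, wseq p σ ≤ 1 := by
      rcases Finset.subset_singleton_iff.mp hsub with h | h <;> rw [h] <;> simp [wseq_nil]
    calc (∑ σ ∈ F, wseq p σ) * Zf S p Finset.univ
        ≤ 1 * Zf S p Finset.univ := by
          apply mul_le_mul_of_nonneg_right hsum (le_of_lt hZuniv)
      _ = Zf S p Finset.univ := one_mul _
      _ ≤ _ := hbase A
  | succ k ih =>
    intro A F hF
    set F' := F.erase [] with hF'
    have hsplit : ∑ σ ∈ F, wseq p σ ≤ 1 + ∑ σ ∈ F', wseq p σ := by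
      by_cases hmem : ([] : List (Finset E)) ∈ F
      · have := Finset.sum_erase_add F (wseq p) hmem
        rw [← this, wseq_nil]
        linarith
      · rw [hF', Finset.erase_eq_of_notMem hmem]
        have : (0:ℝ) ≤ ∑ σ ∈ F, wseq p σ :=
          Finset.sum_nonneg (fun σ _ => wseq_nonneg p hp0 σ)
        linarith
    -- index set of heads
    set T := (A.powerset.filter (fun J => Indep S J)).erase ∅ with hT
    have hmaps : ∀ σ ∈ F', σ.headI ∈ T := by
      intro σ hσ
      have hσF : σ ∈ F := Finset.mem_of_mem_erase hσ
      have hne : σ ≠ [] := Finset.ne_of_mem_erase hσ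
      obtain ⟨hval, -⟩ := hF σ hσF
      cases σ with
      | nil => exact absurd rfl hne
      | cons J σ' =>
        obtain ⟨hJne, hJind, hJA, -⟩ := hval
        rw [hT, Finset.mem_erase]
        refine ⟨?_, ?_⟩
        · simpa using Finset.nonempty_iff_ne_empty.mp hJne
        · rw [Finset.mem_filter, Finset.mem_powerset]
          exact ⟨hJA, hJind⟩
    have hfiber := Finset.sum_fiberwise_of_maps_to hmaps (wseq p)
    -- bound each fiber
    have hfiberbound : ∀ J ∈ T,
        (∑ σ ∈ F'.filter (fun σ => σ.headI = J), wseq p σ) * Zf S p Finset.univ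
          ≤ (∏ b ∈ J, p b) * Zf S p (Finset.univ \ Nbar S J) := by
      intro J hJT
      rw [hT, Finset.mem_erase, Finset.mem_filter, Finset.mem_powerset] at hJT
      obtain ⟨hJne, hJA, hJind⟩ := hJT
      have hJnonempty : J.Nonempty := Finset.nonempty_iff_ne_empty.mpr hJne
      set G := (F'.filter (fun σ => σ.headI = J)).image List.tail with hG
      have htail : ∀ σ ∈ F'.filter (fun σ => σ.headI = J), σ = J :: σ.tail := by
        intro σ hσ
        rw [Finset.mem_filter] at hσ
        obtain ⟨hσF', hσh⟩ := hσ
        have hne : σ ≠ [] := Finset.ne_of_mem_erase hσF'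
        cases σ with
        | nil => exact absurd rfl hne
        | cons a l => simp only [List.headI_cons] at hσh; rw [hσh]; rfl
      have hinj : ∀ σ₁ ∈ F'.filter (fun σ => σ.headI = J),
          ∀ σ₂ ∈ F'.filter (fun σ => σ.headI = J), σ₁.tail = σ₂.tail → σ₁ = σ₂ := by
        intro σ₁ h₁ σ₂ h₂ he
        rw [htail σ₁ h₁, htail σ₂ h₂, he]
      have hsum_img : ∑ σ ∈ F'.filter (fun σ => σ.headI = J), wseq p σ
          = (∏ b ∈ J, p b) * ∑ σ' ∈ G, wseq p σ' := by
        rw [hG, Finset.sum_image hinj, Finset.mul_sum]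
        refine Finset.sum_congr rfl (fun σ hσ => ?_)
        conv_lhs => rw [htail σ hσ]
        rw [wseq_cons]
      have hGvalid : ∀ σ' ∈ G, ValidFrom S (Dset S J) σ' ∧ sizeSeq σ' ≤ k := by
        intro σ' hσ'
        rw [hG, Finset.mem_image] at hσ'
        obtain ⟨σ, hσ, rfl⟩ := hσ'
        have hσeq := htail σ hσ
        rw [Finset.mem_filter] at hσ
        obtain ⟨hσF', -⟩ := hσ
        have hσF : σ ∈ F := Finset.mem_of_mem_erase hσF'
        obtain ⟨hval, hsz⟩ := hF σ hσF
        rw [hσeq] at hval hsz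
        obtain ⟨-, -, -, hvt⟩ := hval
        refine ⟨hvt, ?_⟩
        have hc : 1 ≤ J.card := Finset.card_pos.mpr hJnonempty
        simp only [sizeSeq, List.map_cons, List.sum_cons] at hsz ⊢
        omega
      have hIH := ih (Dset S J) G hGvalid
      calc (∑ σ ∈ F'.filter (fun σ => σ.headI = J), wseq p σ) * Zf S p Finset.univ
          = (∏ b ∈ J, p b) * ((∑ σ' ∈ G, wseq p σ') * Zf S p Finset.univ) := by
            rw [hsum_img]; ring
        _ ≤ (∏ b ∈ J, p b) * Zf S p (Finset.univ \ Dset S J) := by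
            refine mul_le_mul_of_nonneg_left hIH
              (Finset.prod_nonneg (fun b _ => hp0 b))
        _ ≤ (∏ b ∈ J, p b) * Zf S p (Finset.univ \ Nbar S J) := by
            refine mul_le_mul_of_nonneg_left ?_ (Finset.prod_nonneg (fun b _ => hp0 b))
            exact Zf_sdiff_mono S hws (Finset.subset_union_right)
    -- assemble
    have hfund := fund S p (Finset.subset_univ A)
    have hsplit2 : Zf S p (Finset.univ \ A)
        = Zf S p Finset.univ + ∑ J ∈ T, (∏ b ∈ J, p b) * Zf S p (Finset.univ \ Nbar S J) := by
      rw [← hfund]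
      have hmemEmpty : (∅ : Finset E) ∈ A.powerset.filter (fun J => Indep S J) := by
        rw [Finset.mem_filter, Finset.mem_powerset]
        exact ⟨Finset.empty_subset _, fun b hb => by simp at hb⟩
      rw [← Finset.sum_erase_add _ _ hmemEmpty, ← hT]
      simp [Nbar_empty]
      ring
    calc (∑ σ ∈ F, wseq p σ) * Zf S p Finset.univ
        ≤ (1 + ∑ σ ∈ F', wseq p σ) * Zf S p Finset.univ := by
          apply mul_le_mul_of_nonneg_right hsplit (le_of_lt hZuniv)
      _ = Zf S p Finset.univ + (∑ σ ∈ F', wseq p σ) * Zf S p Finset.univ := by ring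
      _ = Zf S p Finset.univ
          + ∑ J ∈ T, (∑ σ ∈ F'.filter (fun σ => σ.headI = J), wseq p σ) * Zf S p Finset.univ := by
          rw [← hfiber, Finset.sum_mul]
      _ ≤ Zf S p Finset.univ
          + ∑ J ∈ T, (∏ b ∈ J, p b) * Zf S p (Finset.univ \ Nbar S J) := by
          refine add_le_add le_rfl (Finset.sum_le_sum hfiberbound)
      _ = Zf S p (Finset.univ \ A) := hsplit2.symm

end Seq
section WDside
set_option linter.unusedSectionVars false
variable {n : ℕ} {E : Type} [Fintype E] {S : E → Finset (Fin n)}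

open WDag

theorem edge_wf (G : WDag n E S) :
    WellFounded (Function.swap G.edge) := by
  have h1 : WellFounded (Relation.TransGen (Function.swap G.edge)) := by
    letI : IsIrrefl (Fin G.size) (Relation.TransGen (Function.swap G.edge)) :=
      ⟨fun v hv => G.acyclic v ((Relation.transGen_swap).mp hv)⟩
    exact Finite.wellFounded_of_trans_of_irrefl _
  exact Subrelation.wf (fun h => Relation.TransGen.single h) h1

/-- depth of a node: 1 + maximum depth over out-neighbours (1 for sinks). -/
noncomputable def ndepth (G : WDag n E S) : Fin G.size → ℕ :=
  (edge_wf G).fix (fun v ih =>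
    (Finset.univ.filter (fun w => G.edge v w)).attach.sup
      (fun w => ih w.1 (Finset.mem_filter.mp w.2).2) + 1)

theorem ndepth_eq (G : WDag n E S) (v : Fin G.size) :
    ndepth G v = (Finset.univ.filter (fun w => G.edge v w)).sup (ndepth G) + 1 := by
  rw [ndepth, WellFounded.fix_eq]
  congr 1
  exact Finset.sup_attach _ _

theorem ndepth_pos (G : WDag n E S) (v : Fin G.size) : 1 ≤ ndepth G v := by
  rw [ndepth_eq]; omega

theorem edge_ndepth_lt (G : WDag n E S) {v w : Fin G.size} (h : G.edge v w) :
    ndepth G w < ndepth G v := by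
  conv_rhs => rw [ndepth_eq]
  have : ndepth G w ≤ (Finset.univ.filter (fun w => G.edge v w)).sup (ndepth G) :=
    Finset.le_sup (Finset.mem_filter.mpr ⟨Finset.mem_univ _, h⟩)
  omega

theorem sink_iff_ndepth_one (G : WDag n E S) (v : Fin G.size) :
    IsSink G v ↔ ndepth G v = 1 := by
  constructor
  · intro hs
    rw [ndepth_eq]
    have : (Finset.univ.filter (fun w => G.edge v w)) = ∅ := by
      rw [Finset.filter_eq_empty_iff]
      exact fun w _ => hs w
    rw [this]
    simp
  · intro h1 w hw
    have := edge_ndepth_lt G hw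
    have := ndepth_pos G w
    omega

theorem ndepth_succ_exists (G : WDag n E S) {v : Fin G.size} (hv : 2 ≤ ndepth G v) :
    ∃ w, G.edge v w ∧ ndepth G w + 1 = ndepth G v := by
  have h1 := ndepth_eq G v
  have hne : (Finset.univ.filter (fun w => G.edge v w)).Nonempty := by
    rw [Finset.nonempty_iff_ne_empty]
    intro he
    rw [he] at h1
    simp at h1
    omega
  obtain ⟨w, hwmem, hwsup⟩ := Finset.exists_mem_eq_sup _ hne (ndepth G)
  rw [Finset.mem_filter] at hwmem
  exact ⟨w, hwmem.2, by omega⟩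

end WDside
section WDside2
set_option linter.unusedSectionVars false
variable {n : ℕ} {E : Type} [Fintype E] {S : E → Finset (Fin n)}

open WDag

theorem lab_dep {G : WDag n E S} {b : E} (hbb : Dep S b b) (hsl : SinkLabeled G b)
    (v : Fin G.size) : Dep S (G.label v) (G.label v) := by
  obtain ⟨v₀, hv₀sink, hv₀lab, huniq⟩ := hsl
  by_cases hs : IsSink G v
  · rw [huniq v hs, hv₀lab]; exact hbb
  · rw [IsSink] at hs
    push_neg at hs
    obtain ⟨w, hw⟩ := hs
    have hdep := G.edge_dep v w hw
    rw [Dep] at hdep ⊢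
    rw [Finset.inter_self]
    obtain ⟨x, hx⟩ := hdep
    exact ⟨x, (Finset.mem_inter.mp hx).1⟩

theorem same_depth_distinct {G : WDag n E S} {b : E} (hbb : Dep S b b)
    (hsl : SinkLabeled G b) {v w : Fin G.size} (hne : v ≠ w)
    (hd : ndepth G v = ndepth G w) :
    ¬ Dep S (G.label v) (G.label w) ∧ G.label v ≠ G.label w := by
  have hnd : ¬ Dep S (G.label v) (G.label w) := by
    intro hdep
    rcases G.dep_edge v w hne hdep with h | h
    · have := edge_ndepth_lt G h; omega
    · have := edge_ndepth_lt G h; omega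
  refine ⟨hnd, fun heq => hnd ?_⟩
  rw [heq]
  exact lab_dep hbb hsl w

/-- the set of labels occurring at a given depth. -/
noncomputable def layer (G : WDag n E S) (t : ℕ) : Finset E :=
  (Finset.univ.filter (fun v => ndepth G v = t)).image G.label

/-- maximum depth. -/
noncomputable def maxd (G : WDag n E S) : ℕ :=
  (Finset.univ : Finset (Fin G.size)).sup (ndepth G)

/-- the layer sequence of a witness DAG. -/
noncomputable def seqW (G : WDag n E S) : List (Finset E) :=
  (List.range (maxd G)).map (fun i => layer G (i + 1))

theorem ndepth_le_maxd (G : WDag n E S) (v : Fin G.size) : ndepth G v ≤ maxd G :=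
  Finset.le_sup (Finset.mem_univ v)

theorem size_pos_of_sinkLabeled {G : WDag n E S} {b : E} (hsl : SinkLabeled G b) :
    0 < G.size := by
  obtain ⟨v₀, -, -, -⟩ := hsl
  exact v₀.pos

theorem exists_ndepth {G : WDag n E S} {b : E} (hsl : SinkLabeled G b)
    {t : ℕ} (ht1 : 1 ≤ t) (ht2 : t ≤ maxd G) : ∃ v, ndepth G v = t := by
  -- first get a node of maximal depth
  have hne : (Finset.univ : Finset (Fin G.size)).Nonempty := by
    obtain ⟨v₀, -, -, -⟩ := hsl
    exact ⟨v₀, Finset.mem_univ _⟩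
  obtain ⟨v₁, -, hv₁⟩ := Finset.exists_mem_eq_sup _ hne (ndepth G)
  have hv₁d : ndepth G v₁ = maxd G := hv₁.symm
  -- descend
  have hdesc : ∀ d : ℕ, ∀ v : Fin G.size, ndepth G v = t + d → ∃ u, ndepth G u = t := by
    intro d
    induction d with
    | zero => exact fun v hv => ⟨v, by omega⟩
    | succ d ihd =>
      intro v hv
      have h2 : 2 ≤ ndepth G v := by omega
      obtain ⟨w, -, hw⟩ := ndepth_succ_exists G h2
      exact ihd w (by omega)
  exact hdesc (maxd G - t) v₁ (by omega)

theorem layer_nonempty {G : WDag n E S} {b : E} (hsl : SinkLabeled G b)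
    {t : ℕ} (ht1 : 1 ≤ t) (ht2 : t ≤ maxd G) : (layer G t).Nonempty := by
  obtain ⟨v, hv⟩ := exists_ndepth hsl ht1 ht2
  exact ⟨G.label v, Finset.mem_image.mpr ⟨v, Finset.mem_filter.mpr ⟨Finset.mem_univ _, hv⟩, rfl⟩⟩

theorem layer_indep {G : WDag n E S} {b : E} (hbb : Dep S b b) (hsl : SinkLabeled G b)
    (t : ℕ) : Indep S (layer G t) := by
  intro x hx y hy hxy
  rw [layer, Finset.mem_image] at hx hy
  obtain ⟨v, hv, rfl⟩ := hx
  obtain ⟨w, hw, rfl⟩ := hy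
  rw [Finset.mem_filter] at hv hw
  have hvw : v ≠ w := fun h => hxy (by rw [h])
  exact (same_depth_distinct hbb hsl hvw (hv.2.trans hw.2.symm)).1

theorem layer_subset_Dset (G : WDag n E S) (t : ℕ) :
    layer G (t + 2) ⊆ Dset S (layer G (t + 1)) := by
  intro x hx
  rw [layer, Finset.mem_image] at hx
  obtain ⟨v, hv, rfl⟩ := hx
  rw [Finset.mem_filter] at hv
  have h2 : 2 ≤ ndepth G v := by omega
  obtain ⟨w, hwe, hwd⟩ := ndepth_succ_exists G h2
  rw [Dset, Finset.mem_filter]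
  refine ⟨Finset.mem_univ _, G.label w, ?_, G.edge_dep v w hwe⟩
  rw [layer, Finset.mem_image]
  exact ⟨w, Finset.mem_filter.mpr ⟨Finset.mem_univ _, by omega⟩, rfl⟩

theorem label_inj_on_layer {G : WDag n E S} {b : E} (hbb : Dep S b b)
    (hsl : SinkLabeled G b) (t : ℕ) :
    ∀ v ∈ Finset.univ.filter (fun v => ndepth G v = t),
      ∀ w ∈ Finset.univ.filter (fun v => ndepth G v = t),
        G.label v = G.label w → v = w := by
  intro v hv w hw hvw
  rw [Finset.mem_filter] at hv hw
  by_contra hne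
  exact (same_depth_distinct hbb hsl hne (hv.2.trans hw.2.symm)).2 hvw

theorem layer_one {G : WDag n E S} {b : E} (hsl : SinkLabeled G b) :
    layer G 1 = {b} := by
  obtain ⟨v₀, hv₀sink, hv₀lab, huniq⟩ := hsl
  rw [layer]
  have hfil : Finset.univ.filter (fun v => ndepth G v = 1) = {v₀} := by
    ext v
    rw [Finset.mem_filter, Finset.mem_singleton]
    constructor
    · rintro ⟨-, hd⟩
      exact huniq v ((sink_iff_ndepth_one G v).mpr hd)
    · rintro rfl
      exact ⟨Finset.mem_univ _, (sink_iff_ndepth_one G _).mp hv₀sink⟩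
  rw [hfil, Finset.image_singleton, hv₀lab]

theorem maxd_pos {G : WDag n E S} {b : E} (hsl : SinkLabeled G b) : 1 ≤ maxd G := by
  obtain ⟨v₀, -, -, -⟩ := hsl
  have := ndepth_pos G v₀
  have := ndepth_le_maxd G v₀
  omega

end WDside2
section WDside3
set_option linter.unusedSectionVars false
variable {n : ℕ} {E : Type} [Fintype E] {S : E → Finset (Fin n)}

open WDag

theorem list_prod_range (f : ℕ → ℝ) (m : ℕ) :
    ((List.range m).map f).prod = ∏ i ∈ Finset.range m, f i := by
  induction m with
  | zero => simp
  | succ m ih =>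
    rw [List.range_succ, List.map_append, List.prod_append, Finset.prod_range_succ, ih]
    simp

theorem valid_chain {G : WDag n E S} {b : E} (hbb : Dep S b b) (hsl : SinkLabeled G b) :
    ∀ d t : ℕ, ∀ A : Finset E, t + d = maxd G → layer G (t + 1) ⊆ A →
      ValidFrom S A ((List.range d).map (fun i => layer G (t + 1 + i))) := by
  intro d
  induction d with
  | zero => intro t A _ _; trivial
  | succ d ih =>
    intro t A hd hsub
    rw [List.range_succ_eq_map, List.map_cons, List.map_map]
    have hmap : ((fun i => layer G (t + 1 + i)) ∘ Nat.succ)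
        = (fun i => layer G ((t + 1) + 1 + i)) := by
      funext i
      simp only [Function.comp]
      congr 1
      omega
    rw [hmap]
    refine ⟨?_, ?_, ?_, ?_⟩
    · exact layer_nonempty hsl (by omega) (by omega)
    · exact layer_indep hbb hsl _
    · simpa using hsub
    · refine ih (t + 1) _ (by omega) ?_
      have := layer_subset_Dset G t
      have harith : t + 1 + 1 = t + 2 := by omega
      rw [harith]
      exact this

theorem seqW_head_tail {G : WDag n E S} {b : E} (hbb : Dep S b b) (hsl : SinkLabeled G b) :
    seqW G = ({b} : Finset E) :: (seqW G).tail ∧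
      ValidFrom S (Dset S ({b} : Finset E)) (seqW G).tail := by
  have hm := maxd_pos hsl
  have hm' : maxd G = (maxd G - 1) + 1 := by omega
  have hseq : seqW G = layer G 1 :: (List.range (maxd G - 1)).map
      (fun i => layer G (1 + 1 + i)) := by
    rw [seqW]
    conv_lhs => rw [hm']
    rw [List.range_succ_eq_map, List.map_cons, List.map_map]
    congr 1
    refine List.map_congr_left (fun i _ => ?_)
    simp only [Function.comp]
    congr 1
    omega
  constructor
  · rw [hseq, layer_one hsl]
    rfl
  · have hvt : ValidFrom S (Dset S (layer G 1)) ((List.range (maxd G - 1)).map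
        (fun i => layer G (1 + 1 + i))) := by
      refine valid_chain hbb hsl _ 1 _ (by omega) ?_
      have := layer_subset_Dset G 0
      simpa using this
    rw [layer_one hsl] at hvt
    have : (seqW G).tail = (List.range (maxd G - 1)).map (fun i => layer G (1 + 1 + i)) := by
      rw [hseq]
      rfl
    rw [this]
    exact hvt

theorem seqW_weight (p : E → ℝ) {G : WDag n E S} {b : E}
    (hbb : Dep S b b) (hsl : SinkLabeled G b) :
    wseq p (seqW G) = ∏ v : Fin G.size, p (G.label v) := by
  rw [wseq, seqW, List.map_map]
  have h1 : ((fun J => ∏ x ∈ J, p x) ∘ fun i => layer G (i + 1))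
      = fun i => ∏ x ∈ layer G (i + 1), p x := rfl
  rw [h1, list_prod_range]
  have h2 : ∀ i ∈ Finset.range (maxd G),
      ∏ x ∈ layer G (i + 1), p x
      = ∏ v ∈ Finset.univ.filter (fun v => ndepth G v = i + 1), p (G.label v) := by
    intro i _
    rw [layer, Finset.prod_image (label_inj_on_layer hbb hsl (i+1))]
  rw [Finset.prod_congr rfl h2]
  have h3 : ∀ v : Fin G.size, v ∈ Finset.univ → ndepth G v - 1 ∈ Finset.range (maxd G) := by
    intro v _
    rw [Finset.mem_range]
    have := ndepth_le_maxd G v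
    have := ndepth_pos G v
    omega
  have h4 := Finset.prod_fiberwise_of_maps_to h3 (fun v => p (G.label v))
  rw [← h4]
  refine Finset.prod_congr rfl (fun i _ => ?_)
  refine Finset.prod_congr ?_ (fun _ _ => rfl)
  ext v
  rw [Finset.mem_filter, Finset.mem_filter]
  have := ndepth_pos G v
  constructor
  · rintro ⟨hu, hd⟩; exact ⟨hu, by omega⟩
  · rintro ⟨hu, hd⟩; exact ⟨hu, by omega⟩

end WDside3
section WDside4
set_option linter.unusedSectionVars false
variable {n : ℕ} {E : Type} [Fintype E] {S : E → Finset (Fin n)}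

open WDag

theorem layer_eq_empty_of_gt {G : WDag n E S} {t : ℕ} (ht : maxd G < t ∨ t = 0) :
    layer G t = ∅ := by
  rw [layer, Finset.image_eq_empty, Finset.filter_eq_empty_iff]
  intro v _
  have h1 := ndepth_le_maxd G v
  have h2 := ndepth_pos G v
  omega

theorem maxd_eq_of_seq_eq {G₁ G₂ : WDag n E S} (h : seqW G₁ = seqW G₂) :
    maxd G₁ = maxd G₂ := by
  have := congrArg List.length h
  simpa [seqW] using this

theorem layer_eq_of_seq_eq {G₁ G₂ : WDag n E S} (h : seqW G₁ = seqW G₂) (t : ℕ) :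
    layer G₁ t = layer G₂ t := by
  have hm := maxd_eq_of_seq_eq h
  rcases Nat.eq_zero_or_pos t with rfl | ht
  · rw [layer_eq_empty_of_gt (Or.inr rfl), layer_eq_empty_of_gt (Or.inr rfl)]
  rcases le_or_gt t (maxd G₁) with hle | hgt
  · have hi : t - 1 < maxd G₁ := by omega
    have hi2 : t - 1 < maxd G₂ := by omega
    have h2 := congrArg (fun l => l[t-1]?) h
    simp only [seqW, List.getElem?_map, List.getElem?_range, hi, hi2] at h2
    have ht1 : t - 1 + 1 = t := by omega
    simp only [Option.map_some, Option.some.injEq] at h2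
    rwa [ht1] at h2
  · rw [layer_eq_empty_of_gt (Or.inl hgt), layer_eq_empty_of_gt (Or.inl (by omega))]

theorem mem_layer_iff {G : WDag n E S} {t : ℕ} {x : E} :
    x ∈ layer G t ↔ ∃ v, ndepth G v = t ∧ G.label v = x := by
  rw [layer, Finset.mem_image]
  constructor
  · rintro ⟨v, hv, rfl⟩
    exact ⟨v, (Finset.mem_filter.mp hv).2, rfl⟩
  · rintro ⟨v, hd, rfl⟩
    exact ⟨v, Finset.mem_filter.mpr ⟨Finset.mem_univ _, hd⟩, rfl⟩

theorem iso_of_seq_eq {G₁ G₂ : WDag n E S} {b₁ b₂ : E}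
    (hbb₁ : Dep S b₁ b₁) (hsl₁ : SinkLabeled G₁ b₁)
    (hbb₂ : Dep S b₂ b₂) (hsl₂ : SinkLabeled G₂ b₂)
    (h : seqW G₁ = seqW G₂) : Iso G₁ G₂ := by
  have hlay := layer_eq_of_seq_eq h
  have hex : ∀ v : Fin G₁.size,
      ∃! w : Fin G₂.size, ndepth G₂ w = ndepth G₁ v ∧ G₂.label w = G₁.label v := by
    intro v
    have hx : G₁.label v ∈ layer G₂ (ndepth G₁ v) := by
      rw [← hlay]
      exact mem_layer_iff.mpr ⟨v, rfl, rfl⟩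
    obtain ⟨w, hwd, hwl⟩ := mem_layer_iff.mp hx
    refine ⟨w, ⟨hwd, hwl⟩, ?_⟩
    rintro w' ⟨hw'd, hw'l⟩
    by_contra hne
    exact (same_depth_distinct hbb₂ hsl₂ hne (hw'd.trans hwd.symm)).2 (hw'l.trans hwl.symm)
  have hexBack : ∀ w : Fin G₂.size,
      ∃! v : Fin G₁.size, ndepth G₁ v = ndepth G₂ w ∧ G₁.label v = G₂.label w := by
    intro w
    have hx : G₂.label w ∈ layer G₁ (ndepth G₂ w) := by
      rw [hlay]
      exact mem_layer_iff.mpr ⟨w, rfl, rfl⟩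
    obtain ⟨v, hvd, hvl⟩ := mem_layer_iff.mp hx
    refine ⟨v, ⟨hvd, hvl⟩, ?_⟩
    rintro v' ⟨hv'd, hv'l⟩
    by_contra hne
    exact (same_depth_distinct hbb₁ hsl₁ hne (hv'd.trans hvd.symm)).2 (hv'l.trans hvl.symm)
  set e : Fin G₁.size → Fin G₂.size := fun v => (hex v).exists.choose with he
  have hespec : ∀ v, ndepth G₂ (e v) = ndepth G₁ v ∧ G₂.label (e v) = G₁.label v :=
    fun v => (hex v).exists.choose_spec
  set f : Fin G₂.size → Fin G₁.size := fun w => (hexBack w).exists.choose with hf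
  have hfspec : ∀ w, ndepth G₁ (f w) = ndepth G₂ w ∧ G₁.label (f w) = G₂.label w :=
    fun w => (hexBack w).exists.choose_spec
  have hleft : Function.LeftInverse f e := by
    intro v
    have h1 := hespec v
    have h2 := hfspec (e v)
    exact (hexBack (e v)).unique
      ⟨h2.1, h2.2⟩ ⟨h1.1.symm, h1.2.symm⟩
  have hright : Function.RightInverse f e := by
    intro w
    have h1 := hfspec w
    have h2 := hespec (f w)
    exact (hex (f w)).unique ⟨h2.1, h2.2⟩ ⟨h1.1.symm, h1.2.symm⟩
  refine ⟨⟨e, f, hleft, hright⟩, fun v => (hespec v).2, fun v w => ?_⟩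
  simp only [Equiv.coe_fn_mk]
  constructor
  · intro hedge
    have hdep : Dep S (G₁.label v) (G₁.label w) := by
      rw [← (hespec v).2, ← (hespec w).2]
      exact G₂.edge_dep _ _ hedge
    have hlt : ndepth G₁ w < ndepth G₁ v := by
      have := edge_ndepth_lt G₂ hedge
      rw [(hespec v).1, (hespec w).1] at this
      exact this
    have hne : v ≠ w := by
      intro hvw; rw [hvw] at hlt; omega
    rcases G₁.dep_edge v w hne hdep with h' | h'
    · exact h'
    · have := edge_ndepth_lt G₁ h'
      omega
  · intro hedge
    have hdep : Dep S (G₂.label (e v)) (G₂.label (e w)) := by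
      rw [(hespec v).2, (hespec w).2]
      exact G₁.edge_dep _ _ hedge
    have hlt : ndepth G₂ (e w) < ndepth G₂ (e v) := by
      rw [(hespec v).1, (hespec w).1]
      exact edge_ndepth_lt G₁ hedge
    have hne : e v ≠ e w := by
      intro hvw; rw [hvw] at hlt; omega
    rcases G₂.dep_edge _ _ hne hdep with h' | h'
    · exact h'
    · have := edge_ndepth_lt G₂ h'
      omega

end WDside4
/-- If the Shearer criterion holds with ε-slack and V is a
dependency-clique, then for 0 ≤ ρ < ε, the sum over B ∈ V of the adjusted
weights a_ρ(τ) over all single-sink witness DAGs τ with sink labeled B is at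
most (1+ρ)/(ε-ρ). -/
theorem stmt1 {n : ℕ} {E : Type} [Fintype E] (S : E → Finset (Fin n)) (P : E → ℝ)
    (hP0 : ∀ b, 0 ≤ P b) (hP1 : ∀ b, P b ≤ 1) (ε ρ : ℝ)
    (hslack : Shearer S (fun b => (1 + ε) * P b))
    (hρ0 : 0 ≤ ρ) (hρε : ρ < ε)
    (V : Finset E) (hV : ∀ b ∈ V, ∀ b' ∈ V, Dep S b b') :
    ∑ b ∈ V, ∑' τ : {c : WDag.WClass n E S //
        ∃ G : WDag n E S, Quotient.mk (WDag.wdSetoid n E S) G = c ∧ WDag.SinkLabeled G b},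
        ENNReal.ofReal (WDag.cawt P ρ τ.1)
      ≤ ENNReal.ofReal ((1 + ρ) / (ε - ρ)) := by
  classical
  set p' : E → ℝ := fun b => (1 + ρ) * P b with hp'
  have hρ1 : (0:ℝ) < 1 + ρ := by linarith
  have hp'0 : ∀ b, 0 ≤ p' b := fun b => mul_nonneg (le_of_lt hρ1) (hP0 b)
  obtain ⟨hZpos, hws', hfinal⟩ := finalC S P hP0 ε ρ hslack hρ0 hρε V hV
  set β : E → ℝ := fun b =>
    p' b * (Zf S p' (Finset.univ \ Dset S {b}) / Zf S p' Finset.univ) with hβ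
  have hZdnn : ∀ b : E, 0 ≤ Zf S p' (Finset.univ \ Dset S {b}) := by
    intro b
    have := Zf_sdiff_mono S hws' (Finset.empty_subset (Dset S {b}))
    simp only [Finset.sdiff_empty] at this
    linarith
  have hβnn : ∀ b : E, 0 ≤ β b := by
    intro b
    exact mul_nonneg (hp'0 b) (div_nonneg (hZdnn b) (le_of_lt hZpos))
  -- step A : each tsum is bounded by ofReal (β b)
  have hstepA : ∀ b ∈ V,
      (∑' τ : {c : WDag.WClass n E S //
        ∃ G : WDag n E S, Quotient.mk (WDag.wdSetoid n E S) G = c ∧ WDag.SinkLabeled G b},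
        ENNReal.ofReal (WDag.cawt P ρ τ.1)) ≤ ENNReal.ofReal (β b) := by
    intro b hb
    have hbb : Dep S b b := hV b hb b hb
    rw [ENNReal.tsum_eq_iSup_sum]
    refine iSup_le (fun F => ?_)
    set Gof := fun τ : {c : WDag.WClass n E S //
        ∃ G : WDag n E S, Quotient.mk (WDag.wdSetoid n E S) G = c ∧ WDag.SinkLabeled G b} =>
        τ.2.choose with hGof
    have hGspec : ∀ τ, Quotient.mk (WDag.wdSetoid n E S) (Gof τ) = τ.1
        ∧ WDag.SinkLabeled (Gof τ) b := fun τ => τ.2.choose_spec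
    have hkey : ∀ τ, WDag.cawt P ρ τ.1 = wseq p' (seqW (Gof τ)) := by
      intro τ
      have h1 : WDag.cawt P ρ τ.1 = WDag.awt P ρ (Gof τ) := by
        rw [← (hGspec τ).1]
        rfl
      rw [h1, seqW_weight p' hbb (hGspec τ).2]
      rw [WDag.awt, WDag.wt, hp']
      rw [Finset.prod_mul_distrib, Finset.prod_const, Finset.card_univ, Fintype.card_fin]
      ring
    have hcawt_nn : ∀ τ : {c : WDag.WClass n E S //
        ∃ G : WDag n E S, Quotient.mk (WDag.wdSetoid n E S) G = c ∧ WDag.SinkLabeled G b},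
        0 ≤ WDag.cawt P ρ τ.1 := by
      intro τ
      rw [hkey τ]
      exact wseq_nonneg p' hp'0 _
    have hcons : ∀ τ, seqW (Gof τ) = ({b} : Finset E) :: (seqW (Gof τ)).tail ∧
        ValidFrom S (Dset S ({b} : Finset E)) ((seqW (Gof τ)).tail) :=
      fun τ => seqW_head_tail hbb (hGspec τ).2
    have hinj : ∀ τ₁ ∈ F, ∀ τ₂ ∈ F,
        (seqW (Gof τ₁)).tail = (seqW (Gof τ₂)).tail → τ₁ = τ₂ := by
      intro τ₁ _ τ₂ _ he
      have hseq : seqW (Gof τ₁) = seqW (Gof τ₂) := by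
        rw [(hcons τ₁).1, (hcons τ₂).1, he]
      have hiso := iso_of_seq_eq hbb (hGspec τ₁).2 hbb (hGspec τ₂).2 hseq
      have hquot : Quotient.mk (WDag.wdSetoid n E S) (Gof τ₁)
          = Quotient.mk (WDag.wdSetoid n E S) (Gof τ₂) := Quotient.sound hiso
      have h1 : τ₁.1 = τ₂.1 := by
        rw [← (hGspec τ₁).1, ← (hGspec τ₂).1, hquot]
      exact Subtype.ext h1
    set Gset := F.image (fun τ => (seqW (Gof τ)).tail) with hGset
    set k := Gset.sup sizeSeq with hk
    have hGsethyp : ∀ σ ∈ Gset, ValidFrom S (Dset S ({b} : Finset E)) σ ∧ sizeSeq σ ≤ k := by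
      intro σ hσ
      rw [hGset, Finset.mem_image] at hσ
      obtain ⟨τ, hτ, rfl⟩ := hσ
      exact ⟨(hcons τ).2, Finset.le_sup (Finset.mem_image_of_mem _ hτ)⟩
    have hsb := seqbound S p' hp'0 hws' k (Dset S ({b} : Finset E)) Gset hGsethyp
    have hreal : ∑ τ ∈ F, WDag.cawt P ρ τ.1 ≤ β b := by
      have h1 : ∑ τ ∈ F, WDag.cawt P ρ τ.1
          = p' b * ∑ σ ∈ Gset, wseq p' σ := by
        rw [hGset, Finset.sum_image hinj, Finset.mul_sum]
        refine Finset.sum_congr rfl (fun τ _ => ?_)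
        rw [hkey τ]
        conv_lhs => rw [(hcons τ).1]
        rw [wseq_cons, Finset.prod_singleton]
      have h2 : ∑ σ ∈ Gset, wseq p' σ
          ≤ Zf S p' (Finset.univ \ Dset S ({b} : Finset E)) / Zf S p' Finset.univ := by
        rw [le_div_iff₀ hZpos]
        exact hsb
      rw [h1, hβ]
      exact mul_le_mul_of_nonneg_left h2 (hp'0 b)
    calc ∑ τ ∈ F, ENNReal.ofReal (WDag.cawt P ρ τ.1)
        = ENNReal.ofReal (∑ τ ∈ F, WDag.cawt P ρ τ.1) :=
          (ENNReal.ofReal_sum_of_nonneg (fun τ _ => hcawt_nn τ)).symm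
      _ ≤ ENNReal.ofReal (β b) := ENNReal.ofReal_le_ofReal hreal
  -- assemble
  have hsumβ : ∑ b ∈ V, β b ≤ (1 + ρ) / (ε - ρ) := by
    have h1 : ∑ b ∈ V, β b
        = (∑ b ∈ V, p' b * Zf S p' (Finset.univ \ Dset S {b})) / Zf S p' Finset.univ := by
      rw [Finset.sum_div]
      exact Finset.sum_congr rfl (fun b _ => by rw [hβ, mul_div_assoc])
    rw [h1, div_le_iff₀ hZpos]
    exact hfinal
  calc ∑ b ∈ V, ∑' τ : {c : WDag.WClass n E S //
        ∃ G : WDag n E S, Quotient.mk (WDag.wdSetoid n E S) G = c ∧ WDag.SinkLabeled G b},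
        ENNReal.ofReal (WDag.cawt P ρ τ.1)
      ≤ ∑ b ∈ V, ENNReal.ofReal (β b) := Finset.sum_le_sum hstepA
    _ = ENNReal.ofReal (∑ b ∈ V, β b) :=
        (ENNReal.ofReal_sum_of_nonneg (fun b _ => hβnn b)).symm
    _ ≤ ENNReal.ofReal ((1 + ρ) / (ε - ρ)) := ENNReal.ofReal_le_ofReal hsumβ

end LLL
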